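/- Let φ: ℝⁿ × ℝ_{>0} → ℝ, φ(x,τ) = τf(x) + ‖c(x)‖₁, where f is L-smooth (‖∇f(x)−∇f(y)‖ ≤ L‖x−y‖) and each component of c has Γ-Lipschitz gradient so that ‖c(x+αd)‖₁ ≤ ‖c(x)+αJ(x)d‖₁ + (Γ/2)α²‖d‖². Then for α ∈ [0,1], τ > 0: φ(x+αd, τ) − φ(x, τ) ≤ α(τ∇f(x)ᵀd − ‖c(x)‖₁) + (1/2)(τL+Γ)α²‖d‖² + α‖c(x)+J(x)d‖₁. -/

import Mathlib

open scoped RealInnerProductSpace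

/-- The ℓ₁-norm of a vector in ℝᵐ. -/
noncomputable def l1norm {m : ℕ} (v : Fin m → ℝ) : ℝ := ∑ i, |v i|

lemma l1norm_add_le {m : ℕ} (u v : Fin m → ℝ) : l1norm (u + v) ≤ l1norm u + l1norm v := by
  rw [l1norm, l1norm, l1norm, ← Finset.sum_add_distrib]
  exact Finset.sum_le_sum fun i _ => abs_add_le _ _

lemma l1norm_smul {m : ℕ} (a : ℝ) (v : Fin m → ℝ) : l1norm (a • v) = |a| * l1norm v := by
  rw [l1norm, l1norm, Finset.mul_sum]
  exact Finset.sum_congr rfl fun i _ => abs_mul a (v i)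

-- descent lemma
lemma descent {n : ℕ}
    (f : EuclideanSpace ℝ (Fin n) → ℝ)
    (g : EuclideanSpace ℝ (Fin n) → EuclideanSpace ℝ (Fin n))
    (hgrad : ∀ x, HasGradientAt f (g x) x)
    (L : ℝ) (hL : 0 < L)
    (hLip : ∀ x y, ‖g x - g y‖ ≤ L * ‖x - y‖)
    (x s : EuclideanSpace ℝ (Fin n)) :
    f (x + s) ≤ f x + ⟪g x, s⟫ + L / 2 * ‖s‖ ^ 2 := by
  set F : ℝ → ℝ := fun t => f (x + t • s) - t * ⟪g x, s⟫ - L / 2 * t ^ 2 * ‖s‖ ^ 2 with hF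
  have hline : ∀ t : ℝ, HasDerivAt (fun t : ℝ => x + t • s) s t := fun t =>
    by simpa using ((hasDerivAt_id t).smul_const s).const_add x
  have hFderiv : ∀ t : ℝ, HasDerivAt F (⟪g (x + t • s), s⟫ - ⟪g x, s⟫ - L * t * ‖s‖ ^ 2) t := by
    intro t
    have h1 : HasDerivAt (fun t : ℝ => f (x + t • s)) (⟪g (x + t • s), s⟫) t := by
      have := ((hgrad (x + t • s)).hasFDerivAt.comp t (hline t)).hasDerivAt
      simp at this
      exact this
    have h2 : HasDerivAt (fun t : ℝ => t * ⟪g x, s⟫) (⟪g x, s⟫) t := by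
      simpa using (hasDerivAt_id t).mul_const (⟪g x, s⟫)
    have h3 : HasDerivAt (fun t : ℝ => L / 2 * t ^ 2 * ‖s‖ ^ 2) (L * t * ‖s‖ ^ 2) t := by
      have : HasDerivAt (fun t : ℝ => t ^ 2) (2 * t) t := by
        simpa using hasDerivAt_pow 2 t
      have := ((this.const_mul (L / 2)).mul_const (‖s‖ ^ 2))
      rw [show L * t * ‖s‖ ^ 2 = L / 2 * (2 * t) * ‖s‖ ^ 2 by ring]
      exact this
    exact (h1.sub h2).sub h3
  have hderiv_nonpos : ∀ t ∈ Set.Icc (0:ℝ) 1,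
      ⟪g (x + t • s), s⟫ - ⟪g x, s⟫ - L * t * ‖s‖ ^ 2 ≤ 0 := by
    intro t ht
    have h1 : ⟪g (x + t • s) - g x, s⟫ ≤ ‖g (x + t • s) - g x‖ * ‖s‖ :=
      real_inner_le_norm _ _
    have h2 : ‖g (x + t • s) - g x‖ ≤ L * (t * ‖s‖) := by
      have := hLip (x + t • s) x
      simpa [norm_smul, abs_of_nonneg ht.1, mul_assoc] using this
    have h3 : ⟪g (x + t • s) - g x, s⟫ = ⟪g (x + t • s), s⟫ - ⟪g x, s⟫ :=
      inner_sub_left _ _ _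
    nlinarith [norm_nonneg s, norm_nonneg (g (x + t • s) - g x)]
  have hmono : AntitoneOn F (Set.Icc (0:ℝ) 1) := by
    apply antitoneOn_of_deriv_nonpos (convex_Icc 0 1)
    · exact fun t _ => (hFderiv t).differentiableAt.continuousAt.continuousWithinAt
    · exact fun t _ => (hFderiv t).differentiableAt.differentiableWithinAt
    · intro t ht
      rw [(hFderiv t).deriv]
      exact hderiv_nonpos t (Set.mem_Icc_of_Ioo (by simpa using ht))
  have := hmono (Set.left_mem_Icc.2 zero_le_one) (Set.right_mem_Icc.2 zero_le_one) zero_le_one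
  simp only [hF] at this
  simp only [zero_smul, one_smul, add_zero, zero_mul, zero_pow, sub_zero, mul_zero, one_mul,
    one_pow, mul_one] at this
  linarith

theorem stmt_16 {n m : ℕ}
    (f : EuclideanSpace ℝ (Fin n) → ℝ)
    (g : EuclideanSpace ℝ (Fin n) → EuclideanSpace ℝ (Fin n))
    (hgrad : ∀ x, HasGradientAt f (g x) x)
    (L Γ : ℝ) (hL : 0 < L) (hΓ : 0 < Γ)
    (hLip : ∀ x y, ‖g x - g y‖ ≤ L * ‖x - y‖)
    (c : EuclideanSpace ℝ (Fin n) → Fin m → ℝ)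
    (J : EuclideanSpace ℝ (Fin n) → (EuclideanSpace ℝ (Fin n) →L[ℝ] (Fin m → ℝ)))
    (hJac : ∀ x s, l1norm (c (x + s) - c x - J x s) ≤ Γ / 2 * ‖s‖ ^ 2)
    (x d : EuclideanSpace ℝ (Fin n)) (α τ : ℝ)
    (hα : α ∈ Set.Icc (0 : ℝ) 1) (hτ : 0 < τ) :
    (τ * f (x + α • d) + l1norm (c (x + α • d))) - (τ * f x + l1norm (c x)) ≤
      α * (τ * ⟪g x, d⟫ - l1norm (c x)) + (1 / 2) * (τ * L + Γ) * α ^ 2 * ‖d‖ ^ 2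
        + α * l1norm (c x + J x d) := by
  obtain ⟨hα0, hα1⟩ := hα
  -- descent lemma for f
  have hf : f (x + α • d) ≤ f x + α * ⟪g x, d⟫ + L / 2 * α ^ 2 * ‖d‖ ^ 2 := by
    have := descent f g hgrad L hL hLip x (α • d)
    have hn : ‖α • d‖ ^ 2 = α ^ 2 * ‖d‖ ^ 2 := by
      rw [norm_smul, mul_pow, Real.norm_eq_abs, sq_abs]
    rw [real_inner_smul_right, hn] at this
    linarith
  -- l1 part
  have hc1 : l1norm (c (x + α • d)) ≤ l1norm (c x + α • (J x d)) + Γ / 2 * α ^ 2 * ‖d‖ ^ 2 := by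
    have h := hJac x (α • d)
    have hn : ‖α • d‖ ^ 2 = α ^ 2 * ‖d‖ ^ 2 := by
      rw [norm_smul, mul_pow, Real.norm_eq_abs, sq_abs]
    rw [hn] at h
    have hJs : J x (α • d) = α • (J x d) := map_smul _ _ _
    rw [hJs] at h
    have htri := l1norm_add_le (c (x + α • d) - c x - α • (J x d)) (c x + α • (J x d))
    have he : (c (x + α • d) - c x - α • (J x d)) + (c x + α • (J x d)) = c (x + α • d) := by
      funext i; simp; try ring
    rw [he] at htri
    linarith
  have hc2 : l1norm (c x + α • (J x d)) ≤ (1 - α) * l1norm (c x) + α * l1norm (c x + J x d) := by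
    have he : c x + α • (J x d) = (1 - α) • (c x) + α • (c x + J x d) := by
      funext i; simp; try ring
    rw [he]
    calc l1norm ((1 - α) • (c x) + α • (c x + J x d))
        ≤ l1norm ((1 - α) • (c x)) + l1norm (α • (c x + J x d)) := l1norm_add_le _ _
      _ = (1 - α) * l1norm (c x) + α * l1norm (c x + J x d) := by
          rw [l1norm_smul, l1norm_smul, abs_of_nonneg hα0, abs_of_nonneg (by linarith)]
  nlinarith [hτ.le]
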